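/- Let U₀, U₁ be Hilbert spaces, U = U₀ × U₁ with norm ‖(u₀, u₁)‖_{α,β}² := α²‖u₀‖² + β²‖u₁‖² for parameters α, β > 0, and let b be a bounded bilinear form on U × V for a Hilbert space V. If for some constants c₀, c₁ > 0 every (u₀, u₁) ∈ U satisfies c₀ α‖u₀‖ + c₁ β‖u₁‖ ≤ sup_{v≠0} b(u₀, u₁; v)/‖v‖_{opt,α,β}, where ‖v‖_{opt,α,β} := sup_{(u₀,u₁)≠0} b(u₀, u₁; v)/‖(u₀, u₁)‖_{α,β}, then in fact c₀ α‖u₀‖ + c₁ β‖u₁‖ ≤ √2 ‖(u₀, u₁)‖_{α,β}; conversely ‖(u₀,u₁)‖_{α,β} = sup_{v≠0} b(u₀,u₁;v)/‖v‖_{opt,α,β} whenever ‖·‖_{opt,α,β} is a norm and b has trivial left kernel and V is reflexive. -/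

import Mathlib

/-- The weighted product norm on `U₀ × U₁`. -/
noncomputable def wnorm {U₀ U₁ : Type*} [NormedAddCommGroup U₀] [NormedAddCommGroup U₁]
    (α β : ℝ) (u : U₀ × U₁) : ℝ :=
  Real.sqrt (α ^ 2 * ‖u.1‖ ^ 2 + β ^ 2 * ‖u.2‖ ^ 2)

/-- The optimal test norm on `V` induced by `b` and the weighted norm. -/
noncomputable def optnorm {U₀ U₁ V : Type*}
    [NormedAddCommGroup U₀] [NormedSpace ℝ U₀] [NormedAddCommGroup U₁] [NormedSpace ℝ U₁]
    [NormedAddCommGroup V] [NormedSpace ℝ V]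
    (b : (U₀ × U₁) →ₗ[ℝ] V →ₗ[ℝ] ℝ) (α β : ℝ) (v : V) : ℝ :=
  ⨆ u : {u : U₀ × U₁ // u ≠ 0}, b u v / wnorm α β (u : U₀ × U₁)

/-- The energy norm: dual, via `b`, of the optimal test norm. -/
noncomputable def energynorm {U₀ U₁ V : Type*}
    [NormedAddCommGroup U₀] [NormedSpace ℝ U₀] [NormedAddCommGroup U₁] [NormedSpace ℝ U₁]
    [NormedAddCommGroup V] [NormedSpace ℝ V]
    (b : (U₀ × U₁) →ₗ[ℝ] V →ₗ[ℝ] ℝ) (α β : ℝ) (u : U₀ × U₁) : ℝ :=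
  ⨆ v : {v : V // v ≠ 0}, b u (v : V) / optnorm b α β (v : V)

noncomputable section AuxStmt14
open RealInnerProductSpace

set_option linter.unusedSectionVars false
set_option linter.unusedVariables false

lemma aux_sup_inner14 {E : Type*} [NormedAddCommGroup E] [InnerProductSpace ℝ E] (w : E) :
    (⨆ x : {x : E // x ≠ 0}, ⟪w, (x : E)⟫ / ‖(x : E)‖) = ‖w‖ := by
  have hle : ∀ x : {x : E // x ≠ 0}, ⟪w, (x : E)⟫ / ‖(x : E)‖ ≤ ‖w‖ := by
    intro x
    have hx : 0 < ‖(x : E)‖ := norm_pos_iff.mpr x.2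
    rw [div_le_iff₀ hx]
    exact real_inner_le_norm w x
  refine le_antisymm (Real.iSup_le hle (norm_nonneg w)) ?_
  rcases eq_or_ne w 0 with rfl | hw
  · simpa using Real.iSup_nonneg (fun x : {x : E // x ≠ 0} => by simp)
  · have hbdd : BddAbove (Set.range fun x : {x : E // x ≠ 0} => ⟪w, (x : E)⟫ / ‖(x : E)‖) :=
      ⟨‖w‖, by rintro _ ⟨x, rfl⟩; exact hle x⟩
    refine le_trans ?_ (le_ciSup hbdd (⟨w, hw⟩ : {x : E // x ≠ 0}))
    rw [real_inner_self_eq_norm_mul_norm, mul_div_assoc, div_self (norm_ne_zero_iff.mpr hw),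
      mul_one]

lemma aux_dense_lb14 {E V' : Type*} [NormedAddCommGroup E] [InnerProductSpace ℝ E]
    [AddCommGroup V'] [Module ℝ V'] (W : V' →ₗ[ℝ] E) (hd : Dense (Set.range W : Set E))
    {x : E} (hx : x ≠ 0) :
    ‖x‖ ≤ ⨆ v : {v : V' // v ≠ 0}, ⟪W (v : V'), x⟫ / ‖W (v : V')‖ := by
  have hxn : 0 < ‖x‖ := norm_pos_iff.mpr hx
  have hle : ∀ v : {v : V' // v ≠ 0}, ⟪W (v : V'), x⟫ / ‖W (v : V')‖ ≤ ‖x‖ := by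
    intro v
    rcases eq_or_ne (W (v : V')) 0 with h | h
    · simp [h, hxn.le]
    · rw [div_le_iff₀ (norm_pos_iff.mpr h)]
      calc ⟪W (v : V'), x⟫ ≤ ‖W (v : V')‖ * ‖x‖ := real_inner_le_norm _ _
        _ = ‖x‖ * ‖W (v : V')‖ := mul_comm _ _
  have hbdd : BddAbove (Set.range fun v : {v : V' // v ≠ 0} => ⟪W (v : V'), x⟫ / ‖W (v : V')‖) :=
    ⟨‖x‖, by rintro _ ⟨v, rfl⟩; exact hle v⟩
  refine le_of_forall_pos_le_add ?_
  intro ε hε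
  have hδpos : 0 < min (ε / 2) (‖x‖ / 2) := lt_min (half_pos hε) (half_pos hxn)
  obtain ⟨y, ⟨v, rfl⟩, hyx⟩ :=
    Metric.mem_closure_iff.mp (by rw [hd.closure_eq]; exact Set.mem_univ x) _ hδpos
  rw [dist_eq_norm] at hyx
  have hd1 : ‖x - W v‖ < ε / 2 := hyx.trans_le (min_le_left _ _)
  have hd2 : ‖x - W v‖ < ‖x‖ / 2 := hyx.trans_le (min_le_right _ _)
  have hWv : W v ≠ 0 := by
    intro h
    rw [h, sub_zero] at hd2
    linarith
  have hv : v ≠ 0 := fun h => hWv (by rw [h, map_zero])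
  have hWn : 0 < ‖W v‖ := norm_pos_iff.mpr hWv
  have h1 : ‖x‖ ^ 2 - ‖x - W v‖ * ‖x‖ ≤ ⟪W v, x⟫ := by
    have hcs := real_inner_le_norm (x - W v) x
    have hsub : ⟪x - W v, x⟫ = ⟪x, x⟫ - ⟪W v, x⟫ := by rw [inner_sub_left]
    have hself : ⟪x, x⟫ = ‖x‖ ^ 2 := real_inner_self_eq_norm_sq x
    linarith
  have h2 : ‖W v‖ ≤ ‖x‖ + ‖x - W v‖ := by
    have := norm_sub_norm_le (W v) x
    rw [norm_sub_rev] at this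
    linarith
  have key : ‖x‖ - ε ≤ ⟪W v, x⟫ / ‖W v‖ := by
    rw [le_div_iff₀ hWn]
    nlinarith [norm_nonneg (x - W v), hd1, hd2, h1, h2, hxn, hWn, hε]
  have := le_ciSup hbdd (⟨v, hv⟩ : {v : V' // v ≠ 0})
  simp only at this
  linarith

variable {U₀ U₁ V : Type*}
  [NormedAddCommGroup U₀] [InnerProductSpace ℝ U₀] [CompleteSpace U₀]
  [NormedAddCommGroup U₁] [InnerProductSpace ℝ U₁] [CompleteSpace U₁]
  [NormedAddCommGroup V] [InnerProductSpace ℝ V] [CompleteSpace V]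

def Smap14 (α β : ℝ) : WithLp 2 (U₀ × U₁) →ₗ[ℝ] U₀ × U₁ :=
  (LinearMap.prodMap (α⁻¹ • LinearMap.id) (β⁻¹ • LinearMap.id)).comp
    (WithLp.linearEquiv 2 ℝ (U₀ × U₁)).toLinearMap

def Tfun14 (α β : ℝ) (u : U₀ × U₁) : WithLp 2 (U₀ × U₁) :=
  (WithLp.equiv 2 _).symm (α • u.1, β • u.2)

variable {α β : ℝ}

lemma ST14 (hα : α ≠ 0) (hβ : β ≠ 0) (u : U₀ × U₁) : Smap14 α β (Tfun14 α β u) = u := by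
  ext <;>
    simp [Smap14, Tfun14, smul_smul, inv_mul_cancel₀ hα, inv_mul_cancel₀ hβ,
      mul_inv_cancel₀ hα, mul_inv_cancel₀ hβ]

lemma TS14 (hα : α ≠ 0) (hβ : β ≠ 0) (x : WithLp 2 (U₀ × U₁)) :
    Tfun14 α β (Smap14 α β x) = x :=
  WithLp.ofLp_injective _ <| Prod.ext (by simp [Smap14, Tfun14, smul_smul, mul_inv_cancel₀ hα])
    (by simp [Smap14, Tfun14, smul_smul, mul_inv_cancel₀ hβ])

lemma Tfun_zero14 : Tfun14 α β (0 : U₀ × U₁) = 0 :=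
  WithLp.ofLp_injective _ <| Prod.ext (by simp [Tfun14]) (by simp [Tfun14])

lemma wnorm_eq14 (hα : 0 < α) (hβ : 0 < β) (u : U₀ × U₁) :
    wnorm α β u = ‖Tfun14 α β u‖ := by
  rw [wnorm, WithLp.prod_norm_eq_of_L2]
  congr 1
  have h1 : (Tfun14 α β u).fst = α • u.1 := rfl
  have h2 : (Tfun14 α β u).snd = β • u.2 := rfl
  rw [h1, h2, norm_smul, norm_smul]
  simp only [Real.norm_eq_abs, mul_pow, sq_abs]

lemma Tfun_ne14 (hα : α ≠ 0) (hβ : β ≠ 0) {u : U₀ × U₁} (hu : u ≠ 0) :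
    Tfun14 α β u ≠ 0 := by
  intro h
  apply hu
  have := congrArg (Smap14 α β) h
  rwa [ST14 hα hβ, map_zero] at this

lemma Smap_bound14 (hα : 0 < α) (hβ : 0 < β) (x : WithLp 2 (U₀ × U₁)) :
    ‖Smap14 α β x‖ ≤ (α⁻¹ + β⁻¹) * ‖x‖ := by
  have hx1 : ‖x.fst‖ ≤ ‖x‖ := by
    rw [WithLp.prod_norm_eq_of_L2]
    exact Real.le_sqrt_of_sq_le (by nlinarith [sq_nonneg ‖x.snd‖])
  have hx2 : ‖x.snd‖ ≤ ‖x‖ := by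
    rw [WithLp.prod_norm_eq_of_L2]
    exact Real.le_sqrt_of_sq_le (by nlinarith [sq_nonneg ‖x.fst‖])
  have h : Smap14 α β x = (α⁻¹ • x.fst, β⁻¹ • x.snd) := rfl
  rw [h, Prod.norm_def]
  have hxnn : 0 ≤ ‖x‖ := norm_nonneg _
  apply max_le
  · rw [norm_smul, Real.norm_eq_abs, abs_of_pos (inv_pos.mpr hα)]
    nlinarith [inv_pos.mpr hα, inv_pos.mpr hβ]
  · rw [norm_smul, Real.norm_eq_abs, abs_of_pos (inv_pos.mpr hβ)]
    nlinarith [inv_pos.mpr hα, inv_pos.mpr hβ]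

def Φmap14 (b : (U₀ × U₁) →ₗ[ℝ] V →ₗ[ℝ] ℝ) (M : ℝ)
    (hb : ∀ u v, |b u v| ≤ M * ‖u‖ * ‖v‖) (hα : 0 < α) (hβ : 0 < β) :
    V →ₗ[ℝ] (WithLp 2 (U₀ × U₁) →L[ℝ] ℝ) where
  toFun v := LinearMap.mkContinuous ((b.comp (Smap14 α β)).flip v)
    (|M| * (α⁻¹ + β⁻¹) * ‖v‖) (by
      intro x
      have hSb := Smap_bound14 hα hβ x
      calc ‖(b.comp (Smap14 α β)).flip v x‖ = |b (Smap14 α β x) v| := rfl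
        _ ≤ M * ‖Smap14 α β x‖ * ‖v‖ := hb _ v
        _ ≤ |M| * ‖Smap14 α β x‖ * ‖v‖ :=
            mul_le_mul_of_nonneg_right
              (mul_le_mul_of_nonneg_right (le_abs_self M) (norm_nonneg _)) (norm_nonneg v)
        _ ≤ |M| * ((α⁻¹ + β⁻¹) * ‖x‖) * ‖v‖ := by
            apply mul_le_mul_of_nonneg_right _ (norm_nonneg v)
            exact mul_le_mul_of_nonneg_left hSb (abs_nonneg M)
        _ = |M| * (α⁻¹ + β⁻¹) * ‖v‖ * ‖x‖ := by ring)
  map_add' v w := by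
    ext x
    simp [LinearMap.mkContinuous_apply]
  map_smul' c v := by
    ext x
    simp [LinearMap.mkContinuous_apply]

def Wmap14 (b : (U₀ × U₁) →ₗ[ℝ] V →ₗ[ℝ] ℝ) (M : ℝ)
    (hb : ∀ u v, |b u v| ≤ M * ‖u‖ * ‖v‖) (hα : 0 < α) (hβ : 0 < β) :
    V →ₗ[ℝ] WithLp 2 (U₀ × U₁) where
  toFun v := (InnerProductSpace.toDual ℝ _).symm (Φmap14 b M hb hα hβ v)
  map_add' v w := by simp
  map_smul' c v := by simp

lemma W_inner14 (b : (U₀ × U₁) →ₗ[ℝ] V →ₗ[ℝ] ℝ) (M : ℝ)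
    (hb : ∀ u v, |b u v| ≤ M * ‖u‖ * ‖v‖) (hα : 0 < α) (hβ : 0 < β)
    (v : V) (x : WithLp 2 (U₀ × U₁)) :
    ⟪Wmap14 b M hb hα hβ v, x⟫ = b (Smap14 α β x) v := by
  show ⟪(InnerProductSpace.toDual ℝ _).symm (Φmap14 b M hb hα hβ v), x⟫ = _
  rw [InnerProductSpace.toDual_symm_apply]
  rfl

lemma optnorm_eq14 (b : (U₀ × U₁) →ₗ[ℝ] V →ₗ[ℝ] ℝ) (M : ℝ)
    (hb : ∀ u v, |b u v| ≤ M * ‖u‖ * ‖v‖) (hα : 0 < α) (hβ : 0 < β) (v : V) :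
    optnorm b α β v = ‖Wmap14 b M hb hα hβ v‖ := by
  have hre : optnorm b α β v
      = ⨆ x : {x : WithLp 2 (U₀ × U₁) // x ≠ 0},
          ⟪Wmap14 b M hb hα hβ v, (x : WithLp 2 (U₀ × U₁))⟫ / ‖(x : WithLp 2 (U₀ × U₁))‖ := by
    show sSup (Set.range fun u : {u : U₀ × U₁ // u ≠ 0} =>
          b (u : U₀ × U₁) v / wnorm α β (u : U₀ × U₁))
        = sSup (Set.range fun x : {x : WithLp 2 (U₀ × U₁) // x ≠ 0} =>
          ⟪Wmap14 b M hb hα hβ v, (x : WithLp 2 (U₀ × U₁))⟫ / ‖(x : WithLp 2 (U₀ × U₁))‖)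
    congr 1
    ext r
    simp only [Set.mem_range]
    constructor
    · rintro ⟨⟨u, hu⟩, rfl⟩
      refine ⟨⟨Tfun14 α β u, Tfun_ne14 hα.ne' hβ.ne' hu⟩, ?_⟩
      simp only
      rw [W_inner14, ST14 hα.ne' hβ.ne', wnorm_eq14 hα hβ]
    · rintro ⟨⟨x, hx⟩, rfl⟩
      refine ⟨⟨Smap14 α β x, ?_⟩, ?_⟩
      · intro h
        exact hx (by rw [← TS14 hα.ne' hβ.ne' x, h, Tfun_zero14])
      · simp only
        rw [W_inner14, wnorm_eq14 hα hβ, TS14 hα.ne' hβ.ne']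
  rw [hre, aux_sup_inner14]

lemma energy_eq14 (b : (U₀ × U₁) →ₗ[ℝ] V →ₗ[ℝ] ℝ) (M : ℝ)
    (hb : ∀ u v, |b u v| ≤ M * ‖u‖ * ‖v‖) (hα : 0 < α) (hβ : 0 < β) (u : U₀ × U₁) :
    energynorm b α β u = ⨆ v : {v : V // v ≠ 0},
      ⟪Wmap14 b M hb hα hβ (v : V), Tfun14 α β u⟫ / ‖Wmap14 b M hb hα hβ (v : V)‖ := by
  apply iSup_congr
  intro v
  rw [W_inner14, ST14 hα.ne' hβ.ne', optnorm_eq14 b M hb hα hβ]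

end AuxStmt14

open RealInnerProductSpace in
/-- Abstract weighted-norm duality identity underpinning Lemma 13 and (43). -/
theorem stmt_14
    {U₀ U₁ V : Type*}
    [NormedAddCommGroup U₀] [InnerProductSpace ℝ U₀] [CompleteSpace U₀]
    [NormedAddCommGroup U₁] [InnerProductSpace ℝ U₁] [CompleteSpace U₁]
    [NormedAddCommGroup V] [InnerProductSpace ℝ V] [CompleteSpace V]
    (b : (U₀ × U₁) →ₗ[ℝ] V →ₗ[ℝ] ℝ) (M : ℝ)
    (hb : ∀ u v, |b u v| ≤ M * ‖u‖ * ‖v‖)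
    (α β : ℝ) (hα : 0 < α) (hβ : 0 < β)
    (c₀ c₁ : ℝ) (hc₀ : 0 < c₀) (hc₁ : 0 < c₁) :
    ((∀ u : U₀ × U₁, c₀ * α * ‖u.1‖ + c₁ * β * ‖u.2‖ ≤ energynorm b α β u) →
      ∀ u : U₀ × U₁, c₀ * α * ‖u.1‖ + c₁ * β * ‖u.2‖ ≤ Real.sqrt 2 * wnorm α β u) ∧
    ((∀ v : V, optnorm b α β v = 0 → v = 0) →
      (∀ u : U₀ × U₁, (∀ v, b u v = 0) → u = 0) →
      ∀ u : U₀ × U₁, wnorm α β u = energynorm b α β u) := by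
  have hwnn : ∀ u : U₀ × U₁, 0 ≤ wnorm α β u := fun u => Real.sqrt_nonneg _
  have hwpos : ∀ u : U₀ × U₁, u ≠ 0 → 0 < wnorm α β u := by
    intro u hu
    rw [wnorm_eq14 hα hβ]
    exact norm_pos_iff.mpr (Tfun_ne14 hα.ne' hβ.ne' hu)
  have hmin : 0 < min α β := lt_min hα hβ
  have hwlb : ∀ u : U₀ × U₁, min α β * ‖u‖ ≤ wnorm α β u := by
    intro u
    have h1 : (min α β * ‖u‖) ^ 2 ≤ α ^ 2 * ‖u.1‖ ^ 2 + β ^ 2 * ‖u.2‖ ^ 2 := by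
      rw [Prod.norm_def]
      rcases le_total ‖u.1‖ ‖u.2‖ with h | h
      · rw [max_eq_right h]
        nlinarith [mul_le_mul (min_le_right α β) (min_le_right α β) hmin.le hβ.le,
          sq_nonneg ‖u.2‖, sq_nonneg (α * ‖u.1‖), sq_nonneg ‖u.1‖]
      · rw [max_eq_left h]
        nlinarith [mul_le_mul (min_le_left α β) (min_le_left α β) hmin.le hα.le,
          sq_nonneg ‖u.1‖, sq_nonneg (β * ‖u.2‖), sq_nonneg ‖u.2‖]
    calc min α β * ‖u‖ = Real.sqrt ((min α β * ‖u‖) ^ 2) :=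
          (Real.sqrt_sq (mul_nonneg hmin.le (norm_nonneg u))).symm
      _ ≤ wnorm α β u := Real.sqrt_le_sqrt h1
  have hoptbdd : ∀ v : V, BddAbove (Set.range fun u : {u : U₀ × U₁ // u ≠ 0} =>
      b (u : U₀ × U₁) v / wnorm α β (u : U₀ × U₁)) := by
    intro v
    refine ⟨|M| * ‖v‖ / min α β, ?_⟩
    rintro _ ⟨⟨u, hu⟩, rfl⟩
    simp only
    have h1 : 0 < wnorm α β u := hwpos u hu
    rw [div_le_div_iff₀ h1 hmin]
    have h3 : b u v ≤ |M| * ‖u‖ * ‖v‖ := by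
      calc b u v ≤ |b u v| := le_abs_self _
        _ ≤ M * ‖u‖ * ‖v‖ := hb u v
        _ ≤ |M| * ‖u‖ * ‖v‖ :=
            mul_le_mul_of_nonneg_right
              (mul_le_mul_of_nonneg_right (le_abs_self M) (norm_nonneg u)) (norm_nonneg v)
    have hA : 0 ≤ |M| * ‖v‖ := mul_nonneg (abs_nonneg M) (norm_nonneg v)
    calc b u v * min α β ≤ (|M| * ‖u‖ * ‖v‖) * min α β :=
          mul_le_mul_of_nonneg_right h3 hmin.le
      _ = (|M| * ‖v‖) * (min α β * ‖u‖) := by ring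
      _ ≤ (|M| * ‖v‖) * wnorm α β u := mul_le_mul_of_nonneg_left (hwlb u) hA
      _ = |M| * ‖v‖ * wnorm α β u := rfl
  have hoptnn : ∀ v : V, 0 ≤ optnorm b α β v := by
    intro v
    rcases isEmpty_or_nonempty {u : U₀ × U₁ // u ≠ 0} with he | hne
    · exact le_of_eq (Real.iSup_of_isEmpty _).symm
    · obtain ⟨⟨u, hu⟩⟩ := hne
      rcases le_total 0 (b u v) with h | h
      · refine le_trans (div_nonneg h (hwnn u)) (le_ciSup (hoptbdd v) ⟨u, hu⟩)
      · refine le_trans ?_ (le_ciSup (hoptbdd v) ⟨-u, neg_ne_zero.mpr hu⟩)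
        simp only
        have hw : wnorm α β (-u) = wnorm α β u := by
          simp [wnorm]
        rw [hw, map_neg, LinearMap.neg_apply]
        exact div_nonneg (neg_nonneg.mpr h) (hwnn u)
  have hble : ∀ (u : U₀ × U₁) (v : V), b u v ≤ optnorm b α β v * wnorm α β u := by
    intro u v
    rcases eq_or_ne u 0 with rfl | hu
    · have h0 : wnorm α β (0 : U₀ × U₁) = 0 := by simp [wnorm]
      simp [h0]
    · have h1 : b u v / wnorm α β u ≤ optnorm b α β v :=
        le_ciSup (hoptbdd v) (⟨u, hu⟩ : {u : U₀ × U₁ // u ≠ 0})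
      exact (div_le_iff₀ (hwpos u hu)).mp h1
  have hEW : ∀ u : U₀ × U₁, energynorm b α β u ≤ wnorm α β u := by
    intro u
    refine Real.iSup_le ?_ (hwnn u)
    rintro ⟨v, hv⟩
    simp only
    rcases (hoptnn v).eq_or_lt with h | h
    · rw [← h, div_zero]
      exact hwnn u
    · rw [div_le_iff₀ h]
      calc b u v ≤ optnorm b α β v * wnorm α β u := hble u v
        _ = wnorm α β u * optnorm b α β v := mul_comm _ _
  constructor
  · intro H u
    have h2 : (1 : ℝ) ≤ Real.sqrt 2 := by
      nlinarith [Real.sq_sqrt (by norm_num : (0:ℝ) ≤ 2), Real.sqrt_nonneg 2]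
    calc c₀ * α * ‖u.1‖ + c₁ * β * ‖u.2‖ ≤ energynorm b α β u := H u
      _ ≤ wnorm α β u := hEW u
      _ ≤ Real.sqrt 2 * wnorm α β u := le_mul_of_one_le_left (hwnn u) h2
  · intro _hdef hker u
    refine le_antisymm ?_ (hEW u)
    rw [energy_eq14 b M hb hα hβ u]
    rcases eq_or_ne u 0 with rfl | hu
    · have h0 : wnorm α β (0 : U₀ × U₁) = 0 := by simp [wnorm]
      rw [h0]
      refine Real.iSup_nonneg ?_
      rintro ⟨v, hv⟩
      simp only
      rw [Tfun_zero14]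
      simp
    · rw [wnorm_eq14 hα hβ]
      have horth : (LinearMap.range (Wmap14 b M hb hα hβ))ᗮ = ⊥ := by
        rw [Submodule.eq_bot_iff]
        intro x hx
        have h0 : ∀ v : V, b (Smap14 α β x) v = 0 := by
          intro v
          rw [← W_inner14 b M hb hα hβ v x]
          exact (Submodule.mem_orthogonal _ x).mp hx _ (LinearMap.mem_range_self _ v)
        have h1 : Smap14 α β x = 0 := hker _ h0
        have h2 := TS14 hα.ne' hβ.ne' x
        rw [h1, Tfun_zero14] at h2
        exact h2.symm
      have hd : Dense (Set.range (Wmap14 b M hb hα hβ) : Set (WithLp 2 (U₀ × U₁))) := by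
        have h2 : (LinearMap.range (Wmap14 b M hb hα hβ)).topologicalClosure = ⊤ :=
          Submodule.topologicalClosure_eq_top_iff.mpr horth
        rw [← LinearMap.coe_range, dense_iff_closure_eq, ← Submodule.topologicalClosure_coe,
          h2, Submodule.top_coe]
      exact aux_dense_lb14 _ hd (Tfun_ne14 hα.ne' hβ.ne' hu)
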